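/- If (γ_n) converges weakly to γ in L²((−T, T); ℝ), i.e. ∫_{−T}^{T} γ_n(s)·g(s) ds → ∫_{−T}^{T} γ(s)·g(s) ds for every g ∈ L²((−T, T); ℝ), then b_{γ_n} converges to b_γ strongly in L²((0, T)), that is, ∫_0^T |b_{γ_n}(t) − b_γ(t)|² dt → 0; moreover the derivatives also converge: ∫_0^T |b_{γ_n}′(t) − b_γ′(t)|² dt → 0. -/

import Mathlib

open MeasureTheory Filter Metric Topology ENNReal

/-- The mollifier `ρ_ε(t) = (c/ε)·exp(t²/(t² − ε²))` for `|t| < ε`, and `0` otherwise. -/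
noncomputable def rho (c ε t : ℝ) : ℝ :=
  if |t| < ε then (c / ε) * Real.exp (t ^ 2 / (t ^ 2 - ε ^ 2)) else 0

/-- `b_γ(t) = ∫_{−T}^{T} ρ_ε(t − ε − s)·γ(s) ds`, the time-averaged collector temperature. -/
noncomputable def bgam (c ε T : ℝ) (γ : ℝ → ℝ) (t : ℝ) : ℝ :=
  ∫ s in (-T)..T, rho c ε (t - ε - s) * γ s

noncomputable def rho' (c ε t : ℝ) : ℝ :=
  if |t| < ε then
    (c / ε) * Real.exp (t ^ 2 / (t ^ 2 - ε ^ 2)) * (-(2 * t * ε ^ 2) / (t ^ 2 - ε ^ 2) ^ 2)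
  else 0

lemma rho_meas (c ε : ℝ) : Measurable (rho c ε) := by
  unfold rho
  refine Measurable.ite (measurableSet_lt (measurable_id.abs) measurable_const) ?_ measurable_const
  fun_prop

lemma rho'_meas (c ε : ℝ) : Measurable (rho' c ε) := by
  unfold rho'
  refine Measurable.ite (measurableSet_lt (measurable_id.abs) measurable_const) ?_ measurable_const
  fun_prop

lemma rho_nonneg {c ε : ℝ} (hc : 0 ≤ c) (hε : 0 ≤ ε) (t : ℝ) : 0 ≤ rho c ε t := by
  unfold rho; split
  · positivity
  · exact le_refl 0

lemma rho_le {c ε : ℝ} (hc : 0 ≤ c) (hε : 0 < ε) (t : ℝ) : |rho c ε t| ≤ c / ε := by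
  rw [abs_of_nonneg (rho_nonneg hc hε.le t)]
  unfold rho; split
  · rename_i h
    have h1 : t ^ 2 - ε ^ 2 < 0 := by nlinarith [abs_nonneg t, sq_abs t]
    have h2 : t ^ 2 / (t ^ 2 - ε ^ 2) ≤ 0 := div_nonpos_of_nonneg_of_nonpos (sq_nonneg t) h1.le
    calc c / ε * Real.exp (t ^ 2 / (t ^ 2 - ε ^ 2)) ≤ c / ε * 1 := by
          have := Real.exp_le_one_iff.2 h2
          exact mul_le_mul_of_nonneg_left this (by positivity)
      _ = c / ε := mul_one _
  · positivity

lemma exp_neg_le_four_div_sq {u : ℝ} (hu : 0 < u) : Real.exp (-u) ≤ 4 / u ^ 2 := by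
  have h1 : u / 2 + 1 ≤ Real.exp (u / 2) := Real.add_one_le_exp _
  have h2 : u ^ 2 / 4 ≤ Real.exp u := by
    have : Real.exp u = Real.exp (u / 2) * Real.exp (u / 2) := by
      rw [← Real.exp_add]; ring_nf
    nlinarith [Real.exp_pos (u / 2)]
  rw [Real.exp_neg]
  calc (Real.exp u)⁻¹ ≤ (u ^ 2 / 4)⁻¹ := inv_anti₀ (by positivity) h2
    _ = 4 / u ^ 2 := by rw [inv_div]

lemma hasDerivAt_rho_eps {c ε : ℝ} (hc : 0 ≤ c) (hε : 0 < ε) :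
    HasDerivAt (rho c ε) 0 ε := by
  have hrε : rho c ε ε = 0 := by unfold rho; rw [if_neg]; simp [abs_of_pos hε]
  rw [hasDerivAt_iff_tendsto]
  apply squeeze_zero' (t₀ := 𝓝 ε) (g := fun x => 256 * c / ε ^ 3 * |x - ε|)
  · filter_upwards with x; positivity
  · filter_upwards [ball_mem_nhds ε (by positivity : (0:ℝ) < ε / 2)] with x hx
    rw [hrε]
    simp only [smul_zero, sub_zero, Real.norm_eq_abs]
    rw [mem_ball, Real.dist_eq] at hx
    by_cases hxε : |x| < ε
    · have hx1 : ε / 2 < x := by cases abs_lt.1 hx; cases abs_lt.1 hxε; linarith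
      have hx2 : x < ε := by cases abs_lt.1 hxε; cases abs_lt.1 hx; linarith [abs_lt.1 hxε]
      have hd : 0 < ε - x := by linarith
      have hu : (0:ℝ) < x ^ 2 / (ε ^ 2 - x ^ 2) := by
        apply div_pos (by nlinarith) (by nlinarith)
      have hq : x ^ 2 / (x ^ 2 - ε ^ 2) = -(x ^ 2 / (ε ^ 2 - x ^ 2)) := by
        rw [← div_neg]; ring_nf
      have hua : ε / (8 * (ε - x)) ≤ x ^ 2 / (ε ^ 2 - x ^ 2) := by
        rw [div_le_div_iff₀ (by positivity) (by nlinarith)]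
        nlinarith [mul_pos hd (show (0:ℝ) < 8 * x ^ 2 - ε ^ 2 - ε * x by nlinarith)]
      have hexp : Real.exp (x ^ 2 / (x ^ 2 - ε ^ 2)) ≤ 256 * (ε - x) ^ 2 / ε ^ 2 := by
        rw [hq]
        calc Real.exp (-(x ^ 2 / (ε ^ 2 - x ^ 2))) ≤ Real.exp (-(ε / (8 * (ε - x)))) :=
              Real.exp_le_exp.2 (by linarith)
          _ ≤ 4 / (ε / (8 * (ε - x))) ^ 2 := exp_neg_le_four_div_sq (by positivity)
          _ = 256 * (ε - x) ^ 2 / ε ^ 2 := by field_simp; ring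
      have hrx : rho c ε x = (c / ε) * Real.exp (x ^ 2 / (x ^ 2 - ε ^ 2)) := by
        unfold rho; rw [if_pos hxε]
      rw [hrx, abs_of_nonneg (by positivity : (0:ℝ) ≤ (c / ε) * Real.exp (x ^ 2 / (x ^ 2 - ε ^ 2)))]
      have habs : |x - ε| = ε - x := by rw [abs_of_nonpos (by linarith)]; ring
      rw [habs]
      rw [inv_mul_le_iff₀ (by linarith : (0:ℝ) < ε - x)] -- guess name
      calc c / ε * Real.exp (x ^ 2 / (x ^ 2 - ε ^ 2)) ≤ c / ε * (256 * (ε - x) ^ 2 / ε ^ 2) :=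
            mul_le_mul_of_nonneg_left hexp (by positivity)
        _ = (ε - x) * (256 * c / ε ^ 3 * (ε - x)) := by field_simp
    · have : rho c ε x = 0 := by unfold rho; rw [if_neg hxε]
      rw [this]
      simp only [abs_zero, mul_zero]
      positivity
  · have : Tendsto (fun x : ℝ => |x - ε|) (𝓝 ε) (𝓝 |ε - ε|) := by
      exact ((continuous_id.sub continuous_const).abs).tendsto ε
    simpa using this.const_mul (256 * c / ε ^ 3)

lemma rho_even (c ε t : ℝ) : rho c ε (-t) = rho c ε t := by
  have h : (-t) ^ 2 = t ^ 2 := by ring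
  unfold rho; rw [abs_neg, h]

lemma hasDerivAt_rho {c ε : ℝ} (hc : 0 ≤ c) (hε : 0 < ε) (t : ℝ) :
    HasDerivAt (rho c ε) (rho' c ε t) t := by
  rcases lt_trichotomy |t| ε with h | h | h
  · -- interior
    have hne : t ^ 2 - ε ^ 2 ≠ 0 := by nlinarith [abs_nonneg t, sq_abs t]
    have h1 : HasDerivAt (fun x : ℝ => x ^ 2) (2 * t) t := by
      simpa using hasDerivAt_pow 2 t
    have h2 : HasDerivAt (fun x : ℝ => x ^ 2 - ε ^ 2) (2 * t) t := h1.sub_const _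
    have h3 : HasDerivAt (fun x : ℝ => x ^ 2 / (x ^ 2 - ε ^ 2))
        ((2 * t * (t ^ 2 - ε ^ 2) - t ^ 2 * (2 * t)) / (t ^ 2 - ε ^ 2) ^ 2) t :=
      h1.div h2 hne
    have h4 := ((h3.exp).const_mul (c / ε))
    have heq : rho c ε =ᶠ[𝓝 t] fun x => (c / ε) * Real.exp (x ^ 2 / (x ^ 2 - ε ^ 2)) := by
      filter_upwards [(isOpen_lt continuous_abs continuous_const).mem_nhds h] with x hx
      unfold rho; rw [if_pos hx]
    have h5 := h4.congr_of_eventuallyEq heq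
    have : rho' c ε t = c / ε * (Real.exp (t ^ 2 / (t ^ 2 - ε ^ 2)) *
        ((2 * t * (t ^ 2 - ε ^ 2) - t ^ 2 * (2 * t)) / (t ^ 2 - ε ^ 2) ^ 2)) := by
      unfold rho'; rw [if_pos h]
      field_simp
      ring
    rw [this]
    exact h5
  · -- |t| = ε
    have hrho'0 : rho' c ε t = 0 := by unfold rho'; rw [if_neg (by rw [h]; exact lt_irrefl ε)]
    rw [hrho'0]
    rcases (abs_eq hε.le).1 h with rfl | rfl
    · exact hasDerivAt_rho_eps hc hε
    · have h0 := hasDerivAt_rho_eps hc hε (c := c)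
      have hneg : HasDerivAt (fun x : ℝ => -x) (-1) (-ε) := hasDerivAt_neg _
      have hcomp : HasDerivAt (fun x : ℝ => rho c ε (-x)) (0 * (-1)) (-ε) := by
        have h0' : HasDerivAt (rho c ε) 0 (-(-ε)) := by rw [neg_neg]; exact h0
        exact HasDerivAt.comp (-ε) h0' hneg
      have hfun : (fun x : ℝ => rho c ε (-x)) = rho c ε := funext (rho_even c ε)
      rw [hfun] at hcomp
      simpa using hcomp
  · -- exterior
    have heq : rho c ε =ᶠ[𝓝 t] fun _ => 0 := by
      filter_upwards [(isOpen_lt continuous_const continuous_abs).mem_nhds h] with x hx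
      unfold rho; rw [if_neg (not_lt.2 hx.le)]
    have : rho' c ε t = 0 := by unfold rho'; rw [if_neg (not_lt.2 h.le)]
    rw [this]
    exact (hasDerivAt_const t 0).congr_of_eventuallyEq heq

lemma rho'_le {c ε : ℝ} (hc : 0 ≤ c) (hε : 0 < ε) (t : ℝ) :
    |rho' c ε t| ≤ 64 * c / ε ^ 2 := by
  unfold rho'
  split
  · rename_i h
    set a := |t| with ha
    have ht2 : t ^ 2 = a ^ 2 := (sq_abs t).symm
    have ha0 : 0 ≤ a := abs_nonneg t
    have hne : t ^ 2 - ε ^ 2 < 0 := by nlinarith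
    have hD : 0 < (t ^ 2 - ε ^ 2) ^ 2 := by nlinarith [mul_pos_of_neg_of_neg hne hne]
    have hE : 0 < Real.exp (t ^ 2 / (t ^ 2 - ε ^ 2)) := Real.exp_pos _
    set E := Real.exp (t ^ 2 / (t ^ 2 - ε ^ 2)) with hEdef
    have habs : |(c / ε) * E * (-(2 * t * ε ^ 2) / (t ^ 2 - ε ^ 2) ^ 2)|
        = (c / ε) * E * (2 * a * ε ^ 2 / (t ^ 2 - ε ^ 2) ^ 2) := by
      rw [abs_mul, abs_mul, abs_of_nonneg (show (0:ℝ) ≤ c / ε by positivity), abs_of_pos hE,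
        abs_div, abs_neg, abs_of_pos hD, abs_mul, abs_mul, abs_two,
        abs_of_nonneg (sq_nonneg ε)]
    rw [habs]
    have hrw : (c / ε) * E * (2 * a * ε ^ 2 / (t ^ 2 - ε ^ 2) ^ 2)
        = (c * E * (2 * a) * ε ^ 2) / (ε * (t ^ 2 - ε ^ 2) ^ 2) := by
      field_simp
    rw [hrw, div_le_div_iff₀ (by positivity) (by positivity)]
    rcases le_or_gt a (ε / 2) with hle | hgt
    · have hE1 : E ≤ 1 := by
        rw [hEdef, Real.exp_le_one_iff]
        exact div_nonpos_of_nonneg_of_nonpos (sq_nonneg t) hne.le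
      have hfrac : (3 / 4 * ε ^ 2) ≤ ε ^ 2 - t ^ 2 := by nlinarith
      have hDlow : 9 / 16 * ε ^ 4 ≤ (t ^ 2 - ε ^ 2) ^ 2 := by nlinarith
      calc c * E * (2 * a) * ε ^ 2 * ε ^ 2 = 2 * c * a * ε ^ 4 * E := by ring
        _ ≤ 2 * c * a * ε ^ 4 * 1 := mul_le_mul_of_nonneg_left hE1 (by positivity)
        _ = 2 * c * ε ^ 4 * a := by ring
        _ ≤ 2 * c * ε ^ 4 * (ε / 2) := mul_le_mul_of_nonneg_left hle (by positivity)
        _ = c * ε ^ 5 := by ring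
        _ ≤ 64 * c * ε * (9 / 16 * ε ^ 4) := by
            nlinarith [mul_nonneg hc (pow_nonneg hε.le 5)]
        _ ≤ 64 * c * ε * ((t ^ 2 - ε ^ 2) ^ 2) := mul_le_mul_of_nonneg_left hDlow (by positivity)
        _ = 64 * c * (ε * (t ^ 2 - ε ^ 2) ^ 2) := by ring
    · have hapos : 0 < a := lt_trans (by positivity) hgt
      have hu : 0 < t ^ 2 / (ε ^ 2 - t ^ 2) := div_pos (by nlinarith) (by nlinarith)
      have hq : t ^ 2 / (t ^ 2 - ε ^ 2) = -(t ^ 2 / (ε ^ 2 - t ^ 2)) := by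
        rw [← div_neg]; ring_nf
      have hE2 : E ≤ 4 / (t ^ 2 / (ε ^ 2 - t ^ 2)) ^ 2 := by
        rw [hEdef, hq]; exact exp_neg_le_four_div_sq hu
      have htne : (t ^ 2) ^ 2 ≠ 0 := by
        have : t ≠ 0 := by
          intro h0
          rw [h0, abs_zero] at ha
          rw [ha] at hgt
          linarith
        positivity
      have h4u : 4 / (t ^ 2 / (ε ^ 2 - t ^ 2)) ^ 2 = 4 * (t ^ 2 - ε ^ 2) ^ 2 / (t ^ 2) ^ 2 := by
        rw [div_pow, div_div_eq_mul_div]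
        congr 1
        ring
      have s1 : E * (t ^ 2) ^ 2 ≤ 4 * (t ^ 2 - ε ^ 2) ^ 2 := by
        have h5 := mul_le_mul_of_nonneg_right (hE2.trans_eq h4u)
          (show (0:ℝ) ≤ (t ^ 2) ^ 2 by positivity)
        rwa [div_mul_cancel₀ _ htne] at h5
      have ha4 : (t ^ 2) ^ 2 = a ^ 4 := by rw [ht2]; ring
      rw [ha4] at s1
      have s2 : ε ^ 3 ≤ 8 * a ^ 3 := by
        nlinarith [pow_le_pow_left₀ (by positivity : (0:ℝ) ≤ ε / 2) hgt.le 3]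
      calc c * E * (2 * a) * ε ^ 2 * ε ^ 2 = 2 * c * ε * (E * a) * ε ^ 3 := by ring
        _ ≤ 2 * c * ε * (E * a) * (8 * a ^ 3) :=
            mul_le_mul_of_nonneg_left s2 (by positivity)
        _ = 16 * c * ε * (E * a ^ 4) := by ring
        _ ≤ 16 * c * ε * (4 * (t ^ 2 - ε ^ 2) ^ 2) :=
            mul_le_mul_of_nonneg_left s1 (by positivity)
        _ = 64 * c * (ε * (t ^ 2 - ε ^ 2) ^ 2) := by ring
  · simp only [abs_zero]; positivity

lemma interval_to_mu {T : ℝ} (hT : 0 < T) (f : ℝ → ℝ) :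
    ∫ s in (-T)..T, f s = ∫ s, f s ∂(volume.restrict (Set.Ioo (-T) T)) := by
  rw [intervalIntegral.integral_of_le (by linarith : -T ≤ T)]
  rw [show (volume.restrict (Set.Ioo (-T) T)) = volume.restrict (Set.Ioc (-T) T) from
    Measure.restrict_congr_set Ioo_ae_eq_Ioc]

lemma finite_mu (T : ℝ) : IsFiniteMeasure (volume.restrict (Set.Ioo (-T) T)) := by
  constructor
  rw [Measure.restrict_apply_univ]
  exact measure_Ioo_lt_top

lemma key_tendsto (T ε : ℝ) (hT : 0 < T) (hε : 0 < ε)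
    (γn : ℕ → ℝ → ℝ) (γ : ℝ → ℝ)
    (hmem : ∀ n, MemLp (γn n) 2 (volume.restrict (Set.Ioo (-T) T)))
    (hγ : MemLp γ 2 (volume.restrict (Set.Ioo (-T) T)))
    (hweak : ∀ g : ℝ → ℝ, MemLp g 2 (volume.restrict (Set.Ioo (-T) T)) →
      Tendsto (fun n => ∫ s in (-T)..T, γn n s * g s) atTop
        (nhds (∫ s in (-T)..T, γ s * g s)))
    (ψ : ℝ → ℝ) (hψ : Measurable ψ) (M : ℝ) (hM : ∀ t, |ψ t| ≤ M) :
    Tendsto (fun n => ∫ t in (0 : ℝ)..T,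
        |(∫ s in (-T)..T, ψ (t - ε - s) * γn n s) - (∫ s in (-T)..T, ψ (t - ε - s) * γ s)| ^ 2)
      atTop (nhds 0) := by
  set μ := volume.restrict (Set.Ioo (-T) T) with hμdef
  haveI : IsFiniteMeasure μ := finite_mu T
  have hint : ∀ f : ℝ → ℝ, ∫ s in (-T)..T, f s = ∫ s, f s ∂μ := interval_to_mu hT
  have hM0 : 0 ≤ M := (abs_nonneg (ψ 0)).trans (hM 0)
  -- Memℒp of the translates of ψ
  have hgt : ∀ t : ℝ, MemLp (fun s => ψ (t - ε - s)) 2 μ := by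
    intro t
    refine MemLp.of_bound ((hψ.comp (measurable_const.sub measurable_id)).aestronglyMeasurable)
      M (ae_of_all _ fun s => ?_)
    simpa [Real.norm_eq_abs] using hM (t - ε - s)
  -- Lp elements
  set u : ℕ → Lp ℝ 2 μ := fun n => ((hmem n).toLp (γn n)) with hu
  set v : Lp ℝ 2 μ := hγ.toLp γ with hv
  have hinner : ∀ (f : ℝ → ℝ) (hf : MemLp f 2 μ) (w : Lp ℝ 2 μ),
      (inner ℝ (hf.toLp f) w : ℝ) = ∫ s, f s * (w : ℝ → ℝ) s ∂μ := by
    intro f hf w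
    rw [MeasureTheory.L2.inner_def]
    refine integral_congr_ae ?_
    filter_upwards [hf.coeFn_toLp] with s h1
    rw [h1]
    simp [RCLike.inner_apply, mul_comm]
  -- weak convergence transferred to Lp
  have hw : ∀ w : Lp ℝ 2 μ,
      Tendsto (fun n => (inner ℝ (u n) w : ℝ)) atTop (nhds (inner ℝ v w : ℝ)) := by
    intro w
    have hwm : MemLp (w : ℝ → ℝ) 2 μ := Lp.memLp w
    have h := hweak _ hwm
    have e1 : ∀ n, (inner ℝ (u n) w : ℝ) = ∫ s in (-T)..T, γn n s * (w : ℝ → ℝ) s := by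
      intro n; rw [hinner _ (hmem n) w, ← hint]
    have e2 : (inner ℝ v w : ℝ) = ∫ s in (-T)..T, γ s * (w : ℝ → ℝ) s := by
      rw [hinner _ hγ w, ← hint]
    simp only [e1, e2]
    exact h
  -- Banach–Steinhaus: uniform bound on ‖u n‖
  obtain ⟨C, hC⟩ : ∃ C, ∀ n, ‖u n‖ ≤ C := by
    obtain ⟨C', hC'⟩ := banach_steinhaus (g := fun n => innerSL ℝ (u n)) (fun w => by
      obtain ⟨C, hC⟩ := ((hw w).norm).bddAbove_range
      exact ⟨C, fun n => hC ⟨n, by simp [innerSL_apply_apply]⟩⟩)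
    exact ⟨C', fun n => by rw [← innerSL_apply_norm ℝ (u n)]; exact hC' n⟩
  set K := C + ‖v‖ with hK
  have hKn : ∀ n, ‖u n - v‖ ≤ K := fun n =>
    (norm_sub_le _ _).trans (add_le_add_left (hC n) _)
  -- uniform bound on ‖G t‖
  set S : ℝ≥0∞ := μ Set.univ ^ (2 : ℝ≥0∞).toReal⁻¹ * ENNReal.ofReal M with hSdef
  have hS : S ≠ ⊤ := by
    apply ENNReal.mul_ne_top
    · exact ENNReal.rpow_ne_top_of_nonneg (by norm_num) (measure_ne_top μ _)
    · exact ENNReal.ofReal_ne_top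
  have hGnorm : ∀ t : ℝ, ‖(hgt t).toLp (fun s => ψ (t - ε - s))‖ ≤ S.toReal := by
    intro t
    rw [Lp.norm_toLp]
    refine ENNReal.toReal_mono hS ?_
    exact eLpNorm_le_of_ae_bound (ae_of_all _ fun s => by
      simpa [Real.norm_eq_abs] using hM (t - ε - s))
  set D := S.toReal * K with hD
  -- the parametric integrals
  set A : (ℝ → ℝ) → ℝ → ℝ := fun f t => ∫ s, ψ (t - ε - s) * f s ∂μ with hA
  have hAinner : ∀ (f : ℝ → ℝ) (hf : MemLp f 2 μ) (t : ℝ),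
      (inner ℝ ((hgt t).toLp (fun s => ψ (t - ε - s))) (hf.toLp f) : ℝ) = A f t := by
    intro f hf t
    rw [hinner _ (hgt t) (hf.toLp f)]
    refine integral_congr_ae ?_
    filter_upwards [hf.coeFn_toLp] with s hs
    rw [hs]
  -- pointwise convergence
  have hpt : ∀ t : ℝ, Tendsto (fun n => A (γn n) t - A γ t) atTop (nhds 0) := by
    intro t
    have h1 := (hw ((hgt t).toLp (fun s => ψ (t - ε - s))))
    have e1 : ∀ n, (inner ℝ (u n) ((hgt t).toLp (fun s => ψ (t - ε - s))) : ℝ) = A (γn n) t := by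
      intro n; rw [real_inner_comm]; exact hAinner _ (hmem n) t
    have e2 : (inner ℝ v ((hgt t).toLp (fun s => ψ (t - ε - s))) : ℝ) = A γ t := by
      rw [real_inner_comm]; exact hAinner _ hγ t
    rw [e2] at h1
    simp only [e1] at h1
    have h2 := h1.sub (tendsto_const_nhds (x := A γ t) (f := atTop))
    simpa using h2
  -- uniform bound
  have hub : ∀ n t, |A (γn n) t - A γ t| ≤ D := by
    intro n t
    have e : A (γn n) t - A γ t
        = (inner ℝ ((hgt t).toLp (fun s => ψ (t - ε - s))) (u n - v) : ℝ) := by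
      rw [inner_sub_right, hAinner _ (hmem n) t, hAinner _ hγ t]
    rw [e]
    calc |(inner ℝ ((hgt t).toLp (fun s => ψ (t - ε - s))) (u n - v) : ℝ)|
        ≤ ‖(hgt t).toLp (fun s => ψ (t - ε - s))‖ * ‖u n - v‖ := abs_real_inner_le_norm _ _
      _ ≤ S.toReal * K := mul_le_mul (hGnorm t) (hKn n) (norm_nonneg _)
          (ENNReal.toReal_nonneg)
  -- measurability of t ↦ A f t
  have hAm : ∀ (f : ℝ → ℝ), AEStronglyMeasurable f μ → StronglyMeasurable (fun t => A f t) := by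
    intro f hf
    have heq : (fun t => A f t) = fun t => ∫ s, ψ (t - ε - s) * hf.mk f s ∂μ := by
      funext t
      refine integral_congr_ae ?_
      filter_upwards [hf.ae_eq_mk] with s hs
      rw [hs]
    rw [heq]
    apply StronglyMeasurable.integral_prod_right
    apply Measurable.stronglyMeasurable
    exact (hψ.comp ((measurable_fst.sub measurable_const).sub measurable_snd)).mul
      (hf.measurable_mk.comp measurable_snd)
  -- dominated convergence
  have hconv : Tendsto (fun n => ∫ t, |A (γn n) t - A γ t| ^ 2 ∂(volume.restrict (Set.Ioc 0 T)))
      atTop (nhds (∫ (_ : ℝ), (0:ℝ) ∂(volume.restrict (Set.Ioc 0 T)))) := by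
    refine tendsto_integral_of_dominated_convergence (fun _ => D ^ 2) ?_ ?_ ?_ ?_
    · intro n
      exact ((((hAm _ (hmem n).1).measurable.sub (hAm _ hγ.1).measurable).abs.pow_const
        2).aestronglyMeasurable)
    · exact integrable_const _
    · intro n
      refine ae_of_all _ fun t => ?_
      rw [Real.norm_eq_abs, abs_of_nonneg (by positivity)]
      exact pow_le_pow_left₀ (abs_nonneg _) (hub n t) 2
    · refine ae_of_all _ fun t => ?_
      have := ((hpt t).abs).pow 2
      simpa using this
  rw [integral_const, smul_zero] at hconv  -- maybe: simp at hconv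
  have hfin : (fun n => ∫ t in (0 : ℝ)..T,
      |(∫ s in (-T)..T, ψ (t - ε - s) * γn n s) - (∫ s in (-T)..T, ψ (t - ε - s) * γ s)| ^ 2)
      = fun n => ∫ t, |A (γn n) t - A γ t| ^ 2 ∂(volume.restrict (Set.Ioc 0 T)) := by
    funext n
    rw [intervalIntegral.integral_of_le hT.le]
    refine integral_congr_ae (ae_of_all _ fun t => ?_)
    dsimp only
    rw [hint (fun s => ψ (t - ε - s) * γn n s), hint (fun s => ψ (t - ε - s) * γ s)]
  rw [hfin]
  exact hconv

lemma bgam_hasDerivAt {c T ε : ℝ} (hc : 0 ≤ c) (hT : 0 < T) (hε : 0 < ε)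
    (f : ℝ → ℝ) (hf : MemLp f 2 (volume.restrict (Set.Ioo (-T) T))) (t₀ : ℝ) :
    HasDerivAt (bgam c ε T f) (∫ s in (-T)..T, rho' c ε (t₀ - ε - s) * f s) t₀ := by
  set μ := volume.restrict (Set.Ioo (-T) T) with hμ
  haveI : IsFiniteMeasure μ := finite_mu T
  have hint : ∀ g : ℝ → ℝ, ∫ s in (-T)..T, g s = ∫ s, g s ∂μ := interval_to_mu hT
  have hfi : Integrable f μ := hf.integrable one_le_two
  have hfm : AEStronglyMeasurable f μ := hf.1
  have h := hasDerivAt_integral_of_dominated_loc_of_deriv_le (μ := μ) (x₀ := t₀)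
    (F := fun t s => rho c ε (t - ε - s) * f s)
    (F' := fun t s => rho' c ε (t - ε - s) * f s)
    (bound := fun s => (64 * c / ε ^ 2) * |f s|)
    (ball_mem_nhds t₀ one_pos)
    (Eventually.of_forall fun t =>
      (((rho_meas c ε).comp (measurable_const.sub measurable_id)).aestronglyMeasurable.mul hfm))
    ?_ -- integrable F t₀
    (((rho'_meas c ε).comp (measurable_const.sub measurable_id)).aestronglyMeasurable.mul hfm)
    (ae_of_all _ fun s t _ => ?_) -- bound
    (hfi.abs.const_mul _)
    (ae_of_all _ fun s t _ => ?_) -- haderiv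
  · have h2 := h.2
    have hfun : bgam c ε T f = fun t => ∫ s, rho c ε (t - ε - s) * f s ∂μ := by
      funext t
      exact hint (fun s => rho c ε (t - ε - s) * f s)
    rw [hfun, hint (fun s => rho' c ε (t₀ - ε - s) * f s)]
    exact h2
  · -- integrability of F t₀
    refine (hfi.abs.const_mul (c / ε)).mono'
      ((((rho_meas c ε).comp (measurable_const.sub measurable_id)).aestronglyMeasurable.mul hfm))
      (ae_of_all _ fun s => ?_)
    rw [Real.norm_eq_abs, abs_mul]
    exact mul_le_mul_of_nonneg_right (rho_le hc hε _) (abs_nonneg _)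
  · -- bound on F'
    rw [Real.norm_eq_abs, abs_mul]
    exact mul_le_mul_of_nonneg_right (rho'_le hc hε _) (abs_nonneg _)
  · -- differentiability
    have hin : HasDerivAt (fun x : ℝ => x - ε - s) 1 t := by
      simpa using ((hasDerivAt_id t).sub_const ε).sub_const s
    have := ((hasDerivAt_rho hc hε (t - ε - s)).comp t hin).mul_const (f s)
    simpa using this

/-- If `(γ_n)` converges weakly to `γ` in `L²((−T,T);ℝ)`, then `b_{γ_n} → b_γ` strongly in
`L²((0,T))`, i.e. `∫_0^T |b_{γ_n}(t) − b_γ(t)|² dt → 0`, and moreover the derivatives also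
converge: `∫_0^T |b_{γ_n}′(t) − b_γ′(t)|² dt → 0`. -/
theorem stmt_7 (c : ℝ) (hc : 0 < c) (T ε : ℝ) (hT : 0 < T) (hε : 0 < ε)
    (γn : ℕ → ℝ → ℝ) (γ : ℝ → ℝ)
    (hmem : ∀ n, MemLp (γn n) 2 (volume.restrict (Set.Ioo (-T) T)))
    (hγ : MemLp γ 2 (volume.restrict (Set.Ioo (-T) T)))
    (hweak : ∀ g : ℝ → ℝ, MemLp g 2 (volume.restrict (Set.Ioo (-T) T)) →
      Tendsto (fun n => ∫ s in (-T)..T, γn n s * g s) atTop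
        (nhds (∫ s in (-T)..T, γ s * g s))) :
    Tendsto (fun n => ∫ t in (0 : ℝ)..T, |bgam c ε T (γn n) t - bgam c ε T γ t| ^ 2)
      atTop (nhds 0) ∧
    Tendsto (fun n =>
        ∫ t in (0 : ℝ)..T, |deriv (bgam c ε T (γn n)) t - deriv (bgam c ε T γ) t| ^ 2)
      atTop (nhds 0) := by
  constructor
  · exact key_tendsto T ε hT hε γn γ hmem hγ hweak (rho c ε) (rho_meas c ε) (c / ε)
      (rho_le hc.le hε)
  · have hd : ∀ (f : ℝ → ℝ), MemLp f 2 (volume.restrict (Set.Ioo (-T) T)) → ∀ t : ℝ,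
        deriv (bgam c ε T f) t = ∫ s in (-T)..T, rho' c ε (t - ε - s) * f s :=
      fun f hf t => (bgam_hasDerivAt hc.le hT hε f hf t).deriv
    have hfin : (fun n => ∫ t in (0 : ℝ)..T,
          |deriv (bgam c ε T (γn n)) t - deriv (bgam c ε T γ) t| ^ 2)
        = fun n => ∫ t in (0 : ℝ)..T,
          |(∫ s in (-T)..T, rho' c ε (t - ε - s) * γn n s)
            - (∫ s in (-T)..T, rho' c ε (t - ε - s) * γ s)| ^ 2 := by
      funext n
      apply intervalIntegral.integral_congr
      intro t _
      dsimp only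
      rw [hd _ (hmem n) t, hd _ hγ t]
    rw [hfin]
    exact key_tendsto T ε hT hε γn γ hmem hγ hweak (rho' c ε) (rho'_meas c ε)
      (64 * c / ε ^ 2) (rho'_le hc.le hε)
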